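/- arXiv:1804.10239 — 3 statements merged into one kernel-verified Lean document; each statement's English description precedes it below -/
import Mathlib

section
/- Let n ≥ 1, let a ≥ 1 and M ≥ 0, and let K ⊂ ℝⁿ be a compact set with empty interior such that ℝⁿ \ K is a-quasiconvex. If f : ℝⁿ → ℝ is continuous and every point of ℝⁿ \ K has a neighborhood on which f is M-Lipschitz, then f is (a·M)-Lipschitz on all of ℝⁿ. -/
open Set Metric

noncomputable section

/-- An open set `Ω ⊂ ℝⁿ` is `a`-quasiconvex if any two of its points can be joined by a
rectifiable curve in `Ω` of length at most `a` times their distance. -/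
def IsQuasiconvexSet {n : ℕ} (a : ℝ) (Ω : Set (EuclideanSpace ℝ (Fin n))) : Prop :=
  ∀ x ∈ Ω, ∀ y ∈ Ω, ∃ γ : Path x y,
    Set.range γ ⊆ Ω ∧ eVariationOn γ Set.univ ≤ ENNReal.ofReal (a * dist x y)

/-- Auxiliary: the estimate on the complement of `K`. -/
theorem aux_offK
    (n : ℕ) (a M : ℝ) (hM : 0 ≤ M)
    (K : Set (EuclideanSpace ℝ (Fin n)))
    (hqc : IsQuasiconvexSet a Kᶜ)
    (f : EuclideanSpace ℝ (Fin n) → ℝ) (hf : Continuous f)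
    (hloc : ∀ x ∉ K, ∃ U ∈ nhds x, ∀ y ∈ U, ∀ z ∈ U, |f y - f z| ≤ M * dist y z)
    (ha' : 0 ≤ a) :
    ∀ x ∉ K, ∀ y ∉ K, |f x - f y| ≤ a * M * dist x y := by
  intro x hx y hy
  obtain ⟨γ, hrange, hvar⟩ := hqc x hx y hy
  have hfin : eVariationOn γ Set.univ ≠ ⊤ :=
    ne_top_of_le_ne_top ENNReal.ofReal_ne_top hvar
  -- local Lipschitz neighborhoods pulled back
  have hcov : ∀ u : unitInterval, ∃ U ∈ nhds (γ u),
      ∀ y ∈ U, ∀ z ∈ U, |f y - f z| ≤ M * dist y z := by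
    intro u
    exact hloc (γ u) (hrange (Set.mem_range_self u))
  choose U hU hUlip using hcov
  set c : unitInterval → Set unitInterval := fun u => γ ⁻¹' (interior (U u)) with hc
  have hcopen : ∀ u, IsOpen (c u) := fun u =>
    (isOpen_interior).preimage γ.continuous
  have hcmem : ∀ u, u ∈ c u := fun u =>
    mem_interior_iff_mem_nhds.2 (hU u)
  have hcover : (Set.univ : Set unitInterval) ⊆ ⋃ u, c u := fun u _ =>
    Set.mem_iUnion.2 ⟨u, hcmem u⟩
  obtain ⟨δ, hδ, hball⟩ :=
    lebesgue_number_lemma_of_metric isCompact_univ hcopen hcover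
  obtain ⟨N, hN⟩ := exists_nat_one_div_lt hδ
  set Nr : ℝ := (N : ℝ) + 1 with hNr
  have hNr0 : (0:ℝ) < Nr := by positivity
  -- the partition points
  set t : ℕ → unitInterval := fun i => Set.projIcc 0 1 zero_le_one ((i : ℝ) / Nr) with ht
  have htmono : ∀ i, t i ≤ t (i + 1) := by
    intro i
    apply monotone_projIcc
    gcongr
    exact_mod_cast Nat.le_succ i
  have htdist : ∀ i, dist (t (i+1)) (t i) < δ := by
    intro i
    have h1 : dist (t (i+1)) (t i) ≤ dist (((i:ℝ)+1) / Nr) ((i:ℝ) / Nr) := by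
      have := (LipschitzWith.projIcc (zero_le_one (α := ℝ))).dist_le_mul
        (((i:ℝ)+1) / Nr) ((i:ℝ) / Nr)
      simpa [ht, Nat.cast_succ] using this
    have h2 : dist (((i:ℝ)+1) / Nr) ((i:ℝ) / Nr) = 1 / Nr := by
      rw [Real.dist_eq, div_sub_div_same]
      ring_nf
      rw [abs_of_nonneg (by positivity)]
    have h3 : 1 / Nr < δ := by
      calc 1 / Nr ≤ 1 / ((N:ℝ) + 1) := by rw [hNr]
        _ < δ := hN
    calc dist (t (i+1)) (t i) ≤ 1 / Nr := by rw [← h2]; exact h1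
      _ < δ := h3
  -- single step estimate
  have hstep : ∀ i, |f (γ (t (i+1))) - f (γ (t i))| ≤ M * dist (γ (t (i+1))) (γ (t i)) := by
    intro i
    obtain ⟨u, hu⟩ := hball (t i) (Set.mem_univ _)
    have h1 : t i ∈ c u := hu (mem_ball_self hδ)
    have h2 : t (i+1) ∈ c u := hu (by simpa [mem_ball] using htdist i)
    exact hUlip u _ (interior_subset h2) _ (interior_subset h1)
  -- variation bounds
  have hfinI : ∀ s : Set unitInterval, (eVariationOn γ s) ≠ ⊤ := by
    intro s
    exact ne_top_of_le_ne_top hfin (eVariationOn.mono γ (Set.subset_univ s))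
  have hdistvar : ∀ i, dist (γ (t (i+1))) (γ (t i)) ≤
      (eVariationOn γ (Set.Icc (t i) (t (i+1)))).toReal := by
    intro i
    have := eVariationOn.edist_le γ (Set.right_mem_Icc.2 (htmono i))
      (Set.left_mem_Icc.2 (htmono i))
    rw [dist_edist]
    exact ENNReal.toReal_mono (hfinI _) this
  -- induction
  have hmain : ∀ i, |f (γ (t i)) - f (γ (t 0))| ≤
      M * (eVariationOn γ (Set.Icc (t 0) (t i))).toReal := by
    intro i
    induction i with
    | zero => simp
    | succ i ih =>
      have h0i : t 0 ≤ t i := by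
        apply monotone_projIcc
        gcongr
        exact Nat.zero_le i
      have hadd : eVariationOn γ (Set.Icc (t 0) (t i)) +
          eVariationOn γ (Set.Icc (t i) (t (i+1))) =
          eVariationOn γ (Set.Icc (t 0) (t (i+1))) := by
        have := eVariationOn.Icc_add_Icc γ (s := Set.univ) h0i (htmono i) (Set.mem_univ _)
        simpa using this
      calc |f (γ (t (i+1))) - f (γ (t 0))|
          ≤ |f (γ (t (i+1))) - f (γ (t i))| + |f (γ (t i)) - f (γ (t 0))| := by
            have := abs_sub_le (f (γ (t (i+1)))) (f (γ (t i))) (f (γ (t 0)))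
            linarith
        _ ≤ M * dist (γ (t (i+1))) (γ (t i)) +
            M * (eVariationOn γ (Set.Icc (t 0) (t i))).toReal := by
            have := hstep i
            linarith
        _ ≤ M * (eVariationOn γ (Set.Icc (t i) (t (i+1)))).toReal +
            M * (eVariationOn γ (Set.Icc (t 0) (t i))).toReal := by
            have := hdistvar i
            nlinarith [hdistvar i]
        _ = M * ((eVariationOn γ (Set.Icc (t 0) (t i))).toReal +
            (eVariationOn γ (Set.Icc (t i) (t (i+1)))).toReal) := by ring
        _ = M * (eVariationOn γ (Set.Icc (t 0) (t (i+1)))).toReal := by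
            rw [← ENNReal.toReal_add (hfinI _) (hfinI _), hadd]
  -- endpoints
  have ht0 : t 0 = 0 := by
    simp [ht, Set.projIcc]
  have htN : t (N+1) = 1 := by
    have : ((N:ℝ)+1) / Nr = 1 := by
      rw [hNr]; field_simp
    simp [ht, Nat.cast_succ, this, Set.projIcc]
  have hfinal := hmain (N+1)
  rw [ht0, htN] at hfinal
  have hsrc : γ 0 = x := γ.source
  have htgt : γ 1 = y := γ.target
  rw [hsrc, htgt] at hfinal
  have hvb : (eVariationOn γ (Set.Icc (0:unitInterval) 1)).toReal ≤ a * dist x y := by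
    have h1 : eVariationOn γ (Set.Icc (0:unitInterval) 1) ≤ ENNReal.ofReal (a * dist x y) :=
      le_trans (eVariationOn.mono γ (Set.subset_univ _)) hvar
    calc (eVariationOn γ (Set.Icc (0:unitInterval) 1)).toReal
        ≤ (ENNReal.ofReal (a * dist x y)).toReal :=
          ENNReal.toReal_mono ENNReal.ofReal_ne_top h1
      _ = a * dist x y := ENNReal.toReal_ofReal (by positivity)
  have : |f y - f x| ≤ M * (a * dist x y) := by
    calc |f y - f x| ≤ M * (eVariationOn γ (Set.Icc (0:unitInterval) 1)).toReal := hfinal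
      _ ≤ M * (a * dist x y) := by nlinarith [hvb]
  calc |f x - f y| = |f y - f x| := abs_sub_comm _ _
    _ ≤ M * (a * dist x y) := this
    _ = a * M * dist x y := by ring

/-- If `K ⊂ ℝⁿ` is compact with empty interior and `a`-quasiconvex complement, `f : ℝⁿ → ℝ` is
continuous and every point of `ℝⁿ \ K` has a neighborhood on which `f` is `M`-Lipschitz, then
`f` is `(a·M)`-Lipschitz on all of `ℝⁿ`. -/
theorem lipschitz_of_locally_lipschitz_off_quasiconvex_complement
    (n : ℕ) (hn : 1 ≤ n) (a M : ℝ) (ha : 1 ≤ a) (hM : 0 ≤ M)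
    (K : Set (EuclideanSpace ℝ (Fin n))) (hK : IsCompact K) (hKint : interior K = ∅)
    (hqc : IsQuasiconvexSet a Kᶜ)
    (f : EuclideanSpace ℝ (Fin n) → ℝ) (hf : Continuous f)
    (hloc : ∀ x ∉ K, ∃ U ∈ nhds x, ∀ y ∈ U, ∀ z ∈ U, |f y - f z| ≤ M * dist y z) :
    ∀ x y : EuclideanSpace ℝ (Fin n), |f x - f y| ≤ a * M * dist x y := by
  have haux := aux_offK n a M hM K hqc f hf hloc (by linarith)
  have hdense : Dense Kᶜ := interior_eq_empty_iff_dense_compl.1 hKint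
  set S : Set (EuclideanSpace ℝ (Fin n) × EuclideanSpace ℝ (Fin n)) :=
    {p | |f p.1 - f p.2| ≤ a * M * dist p.1 p.2} with hS
  have hSclosed : IsClosed S := by
    apply isClosed_le
    · exact ((hf.comp continuous_fst).sub (hf.comp continuous_snd)).abs
    · exact (continuous_const.mul (continuous_fst.dist continuous_snd))
  have hsub : Kᶜ ×ˢ Kᶜ ⊆ S := by
    rintro ⟨x, y⟩ ⟨hx, hy⟩
    exact haux x hx y hy
  intro x y
  have : (x, y) ∈ S := by
    have hcl : closure (Kᶜ ×ˢ Kᶜ) = Set.univ := (hdense.prod hdense).closure_eq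
    have : Set.univ ⊆ S := by
      rw [← hcl]
      exact hSclosed.closure_subset_iff.2 hsub
    exact this (Set.mem_univ _)
  exact this
end
end

section
/- There is a universal constant C > 0 such that the following holds. Let (x_k)_{k≥1} ⊂ (0, ∞) be a strictly decreasing sequence converging to 0, let (y_k)_{k≥1} ⊂ (−∞, 0) be a strictly increasing sequence converging to 0, let R > 0 with x₁ < R and |y₁| < R, and let N be a positive integer. Then there exist δ > 0 and a nonincreasing Lipschitz function u : [0, ∞) → [0, 1] with u ≡ 1 on [0, δ] and u ≡ 0 on [R, ∞), such that the radial function g : ℝ² → ℝ defined by g(z) = u(|z|) satisfies ∫_{ℝ²} ‖∇g‖² ≤ C/N, and |u(x_k) − u(x_{k+1})| ≤ 1/N and |u(|y_k|) − u(|y_{k+1}|)| ≤ 1/N for all k ≥ 1. -/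
open MeasureTheory Set Metric Filter

noncomputable section

namespace RadialBump

/-- The basic ramp profile: equals 1 for `t ≤ c`, 0 for `t ≥ e·c`, logarithmic in between. -/
def phi (c t : ℝ) : ℝ := min 1 (max 0 (Real.log (Real.exp 1 * c) - Real.log (max t c)))

lemma phi_nonneg (c t : ℝ) : 0 ≤ phi c t :=
  le_min zero_le_one (le_max_left _ _)

lemma phi_le_one (c t : ℝ) : phi c t ≤ 1 := min_le_left _ _

lemma phi_eq_one {c t : ℝ} (hc : 0 < c) (h : t ≤ c) : phi c t = 1 := by
  have h1 : max t c = c := max_eq_right h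
  have h2 : Real.log (Real.exp 1 * c) = 1 + Real.log c := by
    rw [Real.log_mul (Real.exp_ne_zero 1) hc.ne', Real.log_exp]
  simp [phi, h1, h2]

lemma phi_eq_zero {c t : ℝ} (hc : 0 < c) (h : Real.exp 1 * c ≤ t) : phi c t = 0 := by
  have he : (1:ℝ) ≤ Real.exp 1 := Real.one_le_exp zero_le_one
  have hct : c ≤ t := le_trans (by nlinarith) h
  have h1 : max t c = t := max_eq_left hct
  have h2 : Real.log (Real.exp 1 * c) ≤ Real.log t :=
    Real.log_le_log (by positivity) h
  have h3 : max 0 (Real.log (Real.exp 1 * c) - Real.log t) = 0 :=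
    max_eq_left (by linarith)
  simp [phi, h1, h3]

lemma phi_anti {c : ℝ} (hc : 0 < c) {s t : ℝ} (h : s ≤ t) : phi c t ≤ phi c s := by
  refine min_le_min le_rfl (max_le_max le_rfl (sub_le_sub_left ?_ _))
  exact Real.log_le_log (lt_max_of_lt_right hc) (max_le_max h le_rfl)

lemma log_lip {a p q : ℝ} (ha : 0 < a) (hp : a ≤ p) (hq : a ≤ q) :
    |Real.log p - Real.log q| ≤ a⁻¹ * |p - q| := by
  have key : ∀ p q : ℝ, a ≤ p → a ≤ q → q ≤ p →
      Real.log p - Real.log q ≤ a⁻¹ * (p - q) := by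
    intro p q hp hq hqp
    have hq0 : 0 < q := lt_of_lt_of_le ha hq
    have hp0 : 0 < p := lt_of_lt_of_le ha hp
    have h2 : Real.log (p / q) ≤ p / q - 1 := Real.log_le_sub_one_of_pos (by positivity)
    have h3 : p / q - 1 = (p - q) / q := by field_simp
    have h4 : (p - q) / q ≤ (p - q) / a :=
      div_le_div_of_nonneg_left (by linarith) ha hq
    calc Real.log p - Real.log q = Real.log (p / q) := (Real.log_div hp0.ne' hq0.ne').symm
      _ ≤ p / q - 1 := h2
      _ = (p - q) / q := h3
      _ ≤ (p - q) / a := h4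
      _ = a⁻¹ * (p - q) := by rw [inv_mul_eq_div]
  rcases le_total q p with h | h
  · have hmono : Real.log q ≤ Real.log p := Real.log_le_log (lt_of_lt_of_le ha hq) h
    rw [abs_of_nonneg (by linarith), abs_of_nonneg (by linarith)]
    exact key p q hp hq h
  · have hmono : Real.log p ≤ Real.log q := Real.log_le_log (lt_of_lt_of_le ha hp) h
    rw [abs_sub_comm, abs_sub_comm p q, abs_of_nonneg (by linarith), abs_of_nonneg (by linarith)]
    exact key q p hq hp h

lemma phi_lip {c : ℝ} (hc : 0 < c) (s t : ℝ) :
    |phi c s - phi c t| ≤ c⁻¹ * |s - t| := by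
  set L := Real.log (Real.exp 1 * c)
  set A := max 0 (L - Real.log (max s c))
  set B := max 0 (L - Real.log (max t c))
  have h1 : |phi c s - phi c t| ≤ |A - B| := by
    have := abs_min_sub_min_le_max 1 A 1 B
    simpa [phi, A, B] using this.trans (le_of_eq (by simp : max |(1:ℝ) - 1| |A - B| = |A - B|))
  have h2 : |A - B| ≤ |(L - Real.log (max s c)) - (L - Real.log (max t c))| := by
    have := abs_max_sub_max_le_abs (L - Real.log (max s c)) (L - Real.log (max t c)) 0
    simpa [A, B, max_comm] using this
  have h3 : (L - Real.log (max s c)) - (L - Real.log (max t c))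
      = Real.log (max t c) - Real.log (max s c) := by ring
  have h4 : |Real.log (max t c) - Real.log (max s c)| ≤ c⁻¹ * |max t c - max s c| :=
    log_lip hc (le_max_right _ _) (le_max_right _ _)
  have h5 : |max t c - max s c| ≤ |t - s| := abs_max_sub_max_le_abs _ _ _
  calc |phi c s - phi c t| ≤ |A - B| := h1
    _ ≤ |Real.log (max t c) - Real.log (max s c)| := by rw [← h3]; exact h2
    _ ≤ c⁻¹ * |max t c - max s c| := h4
    _ ≤ c⁻¹ * |t - s| := by
        exact mul_le_mul_of_nonneg_left h5 (by positivity)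
    _ = c⁻¹ * |s - t| := by rw [abs_sub_comm]

end RadialBump

abbrev Plane := EuclideanSpace ℝ (Fin 2)

open RadialBump in
/-- There is a universal constant `C > 0` such that for any strictly decreasing positive
sequence `x_k → 0`, strictly increasing negative sequence `y_k → 0`, radius `R` exceeding
`x 0` and `|y 0|`, and `N ≥ 1`, there is a nonincreasing Lipschitz function
`u : [0,∞) → [0,1]`, equal to `1` near `0` and to `0` on `[R,∞)`, whose radial extension to
`ℝ²` has Dirichlet energy at most `C/N`, and whose successive oscillations along both
sequences are at most `1/N`. -/
theorem radial_bump_small_energy :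
    ∃ C : ℝ, 0 < C ∧
      ∀ (x y : ℕ → ℝ),
        (∀ k, 0 < x k) → StrictAnti x → Tendsto x atTop (nhds 0) →
        (∀ k, y k < 0) → StrictMono y → Tendsto y atTop (nhds 0) →
        ∀ R : ℝ, x 0 < R → |y 0| < R →
        ∀ N : ℕ, 0 < N →
        ∃ (δ : ℝ) (u : ℝ → ℝ) (L : NNReal), 0 < δ ∧
          AntitoneOn u (Ici 0) ∧
          LipschitzOnWith L u (Ici 0) ∧
          (∀ t ∈ Ici (0:ℝ), 0 ≤ u t ∧ u t ≤ 1) ∧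
          (∀ t ∈ Icc (0:ℝ) δ, u t = 1) ∧
          (∀ t ∈ Ici R, u t = 0) ∧
          (∫ z : Plane, ‖fderiv ℝ (fun w : Plane => u ‖w‖) z‖ ^ 2) ≤ C / N ∧
          (∀ k, |u (x k) - u (x (k + 1))| ≤ 1 / N) ∧
          (∀ k, |u (|y k|) - u (|y (k + 1)|)| ≤ 1 / N) := by
  classical
  refine ⟨100, by norm_num, ?_⟩
  intro x y hx0 hxanti hxlim hy0 hymono hylim R hxR hyR N hN
  have hR : 0 < R := (hx0 0).trans hxR
  have he1 : (1:ℝ) ≤ Real.exp 1 := Real.one_le_exp zero_le_one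
  have he2 : (2:ℝ) ≤ Real.exp 1 := by nlinarith [Real.exp_one_gt_d9]
  have hN' : (0:ℝ) < N := by exact_mod_cast hN
  -- construction of the scales
  have step : ∀ c : ℝ, 0 < c → ∃ c', 0 < c' ∧ (∃ k, Real.exp 1 * c' < x k ∧ x k < c) ∧
      (∃ m, Real.exp 1 * c' < |y m| ∧ |y m| < c) := by
    intro c hc
    obtain ⟨k, hk⟩ := (hxlim.eventually_lt_const hc).exists
    obtain ⟨m, hm⟩ := (hylim.eventually_const_lt (show -c < 0 by linarith)).exists
    have hym : |y m| < c := by rw [abs_of_neg (hy0 m)]; linarith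
    have hymp : 0 < |y m| := abs_pos.2 (hy0 m).ne
    have hminpos : 0 < min (x k) |y m| := lt_min (hx0 k) hymp
    have hE : Real.exp 1 * (min (x k) |y m| / (2 * Real.exp 1)) = min (x k) |y m| / 2 := by
      field_simp
    refine ⟨min (x k) |y m| / (2 * Real.exp 1), by positivity, ⟨k, ?_, hk⟩, ⟨m, ?_, hym⟩⟩
    · rw [hE]; have := min_le_left (x k) |y m|; linarith
    · rw [hE]; have := min_le_right (x k) |y m|; linarith
  choose f hf using step
  let A : ℕ → {c : ℝ // 0 < c} := fun n =>
    Nat.rec ⟨R / Real.exp 1, by positivity⟩ (fun _ p => ⟨f p.1 p.2, (hf p.1 p.2).1⟩) n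
  set a : ℕ → ℝ := fun n => (A n).1 with haa
  have ha : ∀ n, 0 < a n := fun n => (A n).2
  have ha0 : a 0 = R / Real.exp 1 := rfl
  have hxpt : ∀ n, ∃ k, Real.exp 1 * a (n+1) < x k ∧ x k < a n := fun n => (hf (A n).1 (A n).2).2.1
  have hypt : ∀ n, ∃ m, Real.exp 1 * a (n+1) < |y m| ∧ |y m| < a n := fun n => (hf (A n).1 (A n).2).2.2
  choose kx hkx1 hkx2 using hxpt
  choose ky hky1 hky2 using hypt
  have hgap : ∀ n, Real.exp 1 * a (n+1) < a n := fun n => (hkx1 n).trans (hkx2 n)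
  have hadec : StrictAnti a := strictAnti_nat_of_succ_lt fun n =>
    lt_of_le_of_lt (le_mul_of_one_le_left (ha (n+1)).le he1) (hgap n)
  set b : ℕ → ℝ := fun n => Real.exp 1 * a n with hbb
  have hbpos : ∀ n, 0 < b n := fun n => by have := ha n; positivity
  have hab : ∀ n, a n ≤ b n := fun n => le_mul_of_one_le_left (ha n).le he1
  have hbanti : ∀ {m n : ℕ}, m ≤ n → b n ≤ b m := fun {m n} h =>
    mul_le_mul_of_nonneg_left (hadec.antitone h) (by positivity)
  have hbR : b 0 = R := by
    show Real.exp 1 * (R / Real.exp 1) = R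
    field_simp
  set u : ℝ → ℝ := fun t => (N:ℝ)⁻¹ * ∑ j ∈ Finset.range N, phi (a j) t with hu
  -- basic properties of u
  have huanti : ∀ {s t : ℝ}, s ≤ t → u t ≤ u s := by
    intro s t hst
    refine mul_le_mul_of_nonneg_left (Finset.sum_le_sum fun j _ => phi_anti (ha j) hst) (by positivity)
  have hurange : ∀ t : ℝ, 0 ≤ u t ∧ u t ≤ 1 := by
    intro t
    constructor
    · have : (0:ℝ) ≤ ∑ j ∈ Finset.range N, phi (a j) t :=
        Finset.sum_nonneg fun j _ => phi_nonneg _ _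
      positivity
    · have h1 : ∑ j ∈ Finset.range N, phi (a j) t ≤ ∑ j ∈ Finset.range N, (1:ℝ) :=
        Finset.sum_le_sum fun j _ => phi_le_one _ _
      rw [Finset.sum_const, Finset.card_range, nsmul_eq_mul, mul_one] at h1
      rw [hu]
      calc (N:ℝ)⁻¹ * ∑ j ∈ Finset.range N, phi (a j) t ≤ (N:ℝ)⁻¹ * N :=
        mul_le_mul_of_nonneg_left h1 (by positivity)
        _ = 1 := by field_simp
  have huone : ∀ t : ℝ, t ≤ a (N-1) → u t = 1 := by
    intro t ht
    have : ∀ j ∈ Finset.range N, phi (a j) t = 1 := by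
      intro j hj
      have hjN : j ≤ N - 1 := Nat.le_pred_of_lt (Finset.mem_range.1 hj)
      exact phi_eq_one (ha j) (ht.trans (hadec.antitone hjN))
    show (N:ℝ)⁻¹ * ∑ j ∈ Finset.range N, phi (a j) t = 1
    rw [Finset.sum_congr rfl this, Finset.sum_const, Finset.card_range, nsmul_eq_mul, mul_one]
    field_simp
  have huzero : ∀ t : ℝ, R ≤ t → u t = 0 := by
    intro t ht
    have : ∀ j ∈ Finset.range N, phi (a j) t = 0 := by
      intro j hj
      refine phi_eq_zero (ha j) ?_
      calc Real.exp 1 * a j = b j := rfl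
        _ ≤ b 0 := hbanti (Nat.zero_le j)
        _ = R := hbR
        _ ≤ t := ht
    show (N:ℝ)⁻¹ * ∑ j ∈ Finset.range N, phi (a j) t = 0
    rw [Finset.sum_congr rfl this, Finset.sum_const]
    simp
  -- plateau values
  have huconst : ∀ j : ℕ, j + 1 ≤ N → ∀ t : ℝ, b (j+1) < t → t < a j →
      u t = (N:ℝ)⁻¹ * (j+1) := by
    intro j hjN t h1 h2
    show (N:ℝ)⁻¹ * ∑ i ∈ Finset.range N, phi (a i) t = _
    have hsplit := Finset.sum_range_add_sum_Ico (fun i => phi (a i) t) hjN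
    have hA : ∀ i ∈ Finset.range (j+1), phi (a i) t = 1 := by
      intro i hi
      exact phi_eq_one (ha i) (h2.le.trans (hadec.antitone (Nat.lt_succ_iff.1 (Finset.mem_range.1 hi))))
    have hB : ∀ i ∈ Finset.Ico (j+1) N, phi (a i) t = 0 := by
      intro i hi
      exact phi_eq_zero (ha i) (le_trans (hbanti (Finset.mem_Ico.1 hi).1) h1.le)
    rw [← hsplit, Finset.sum_congr rfl hA, Finset.sum_congr rfl hB,
      Finset.sum_const, Finset.sum_const, Finset.card_range]
    simp
  -- summed Lipschitz-type bounds
  have habs : ∀ s t : ℝ, |u s - u t| ≤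
      (N:ℝ)⁻¹ * ∑ i ∈ Finset.range N, |phi (a i) s - phi (a i) t| := by
    intro s t
    show |(N:ℝ)⁻¹ * ∑ j ∈ Finset.range N, phi (a j) s -
      (N:ℝ)⁻¹ * ∑ j ∈ Finset.range N, phi (a j) t| ≤ _
    rw [← mul_sub, abs_mul, ← Finset.sum_sub_distrib, abs_of_nonneg (by positivity : (0:ℝ) ≤ (N:ℝ)⁻¹)]
    exact mul_le_mul_of_nonneg_left (Finset.abs_sum_le_sum_abs _ _) (by positivity)
  have hsumbound : ∀ (s t : ℝ) (κ : ℕ → ℝ),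
      (∀ i ∈ Finset.range N, |phi (a i) s - phi (a i) t| ≤ κ i * |s - t|) →
      |u s - u t| ≤ ((N:ℝ)⁻¹ * ∑ i ∈ Finset.range N, κ i) * |s - t| := by
    intro s t κ hκ
    calc |u s - u t| ≤ (N:ℝ)⁻¹ * ∑ i ∈ Finset.range N, |phi (a i) s - phi (a i) t| := habs s t
      _ ≤ (N:ℝ)⁻¹ * ∑ i ∈ Finset.range N, κ i * |s - t| :=
          mul_le_mul_of_nonneg_left (Finset.sum_le_sum hκ) (by positivity)
      _ = ((N:ℝ)⁻¹ * ∑ i ∈ Finset.range N, κ i) * |s - t| := by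
          rw [← Finset.sum_mul]; ring
  have hglob : ∀ s t : ℝ, |u s - u t| ≤
      ((N:ℝ)⁻¹ * ∑ i ∈ Finset.range N, (a i)⁻¹) * |s - t| :=
    fun s t => hsumbound s t _ (fun i _ => phi_lip (ha i) s t)
  have hgeo : ∀ j : ℕ, ∑ i ∈ Finset.range (j+1), (a i)⁻¹ ≤ 2 * (a j)⁻¹ := by
    intro j
    induction j with
    | zero => simp; linarith [inv_pos.2 (ha 0)]
    | succ j ih =>
      rw [Finset.sum_range_succ]
      have h2a : a (j+1) ≤ a j / 2 := by nlinarith [hgap j, ha (j+1)]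
      have hkey : 2 * (a j)⁻¹ ≤ (a (j+1))⁻¹ := by
        have h1 : (a j / 2)⁻¹ ≤ (a (j+1))⁻¹ := by
          apply inv_anti₀ (ha (j+1)) h2a
        have h2 : (a j / 2)⁻¹ = 2 * (a j)⁻¹ := by
          field_simp
        linarith
      linarith
  have hloc : ∀ j : ℕ, j < N → ∀ s t : ℝ, b (j+1) < s → b (j+1) < t →
      |u s - u t| ≤ (2 * ((N:ℝ) * a j)⁻¹) * |s - t| := by
    intro j hj s t hs ht
    set κ : ℕ → ℝ := fun i => if i ≤ j then (a i)⁻¹ else 0 with hκ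
    have hb1 : |u s - u t| ≤ ((N:ℝ)⁻¹ * ∑ i ∈ Finset.range N, κ i) * |s - t| := by
      refine hsumbound s t κ ?_
      intro i _
      by_cases hij : i ≤ j
      · simpa [hκ, hij] using phi_lip (ha i) s t
      · push_neg at hij
        have h0s : phi (a i) s = 0 := phi_eq_zero (ha i) (le_trans (hbanti hij) hs.le)
        have h0t : phi (a i) t = 0 := phi_eq_zero (ha i) (le_trans (hbanti hij) ht.le)
        simp [hκ, h0s, h0t, not_le.2 hij]
    have hsum : ∑ i ∈ Finset.range N, κ i = ∑ i ∈ Finset.range (j+1), (a i)⁻¹ := by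
      rw [← Finset.sum_subset (Finset.range_subset_range.2 (Nat.succ_le_of_lt hj))
        (fun i _ hi => by
          have : ¬ i ≤ j := fun h => hi (Finset.mem_range.2 (Nat.lt_succ_of_le h))
          simp [hκ, this])]
      exact Finset.sum_congr rfl fun i hi => by
        simp [hκ, Nat.lt_succ_iff.1 (Finset.mem_range.1 hi)]
    have hfin : (N:ℝ)⁻¹ * ∑ i ∈ Finset.range N, κ i ≤ 2 * ((N:ℝ) * a j)⁻¹ := by
      rw [hsum, mul_inv]
      calc (N:ℝ)⁻¹ * ∑ i ∈ Finset.range (j+1), (a i)⁻¹ ≤ (N:ℝ)⁻¹ * (2 * (a j)⁻¹) :=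
        mul_le_mul_of_nonneg_left (hgeo j) (by positivity)
        _ = 2 * ((N:ℝ)⁻¹ * (a j)⁻¹) := by ring
    exact hb1.trans (mul_le_mul_of_nonneg_right hfin (abs_nonneg _))
  -- oscillation bound
  have osc : ∀ (p : ℕ → ℝ), (∀ n, Real.exp 1 * a (n+1) < p n) → (∀ n, p n < a n) →
      ∀ s t : ℝ, s ≤ t → (∀ n, ¬(s < p n ∧ p n < t)) → u s - u t ≤ 1 / N := by
    intro p hp1 hp2 s t hst hno
    set d : ℕ → ℝ := fun j => phi (a j) s - phi (a j) t with hd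
    have hd0 : ∀ j, 0 ≤ d j := fun j => sub_nonneg.2 (phi_anti (ha j) hst)
    have hd1 : ∀ j, d j ≤ 1 := by
      intro j
      have h1 := phi_le_one (a j) s
      have h2 := phi_nonneg (a j) t
      simp only [hd]; linarith
    have hact : ∀ j, d j ≠ 0 → s < b j ∧ a j < t := by
      intro j hj
      constructor
      · by_contra h
        push_neg at h
        apply hj
        have h1 : phi (a j) s = 0 := phi_eq_zero (ha j) h
        have h2 : phi (a j) t = 0 := phi_eq_zero (ha j) (le_trans h hst)
        simp [hd, h1, h2]
      · by_contra h
        push_neg at h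
        apply hj
        have h1 : phi (a j) t = 1 := phi_eq_one (ha j) h
        have h2 : phi (a j) s = 1 := phi_eq_one (ha j) (le_trans hst h)
        simp [hd, h1, h2]
    have hpair : ∀ i j : ℕ, i < j → d i ≠ 0 → d j ≠ 0 → False := by
      intro i j hij di dj
      obtain ⟨hs1, ht1⟩ := hact i di
      obtain ⟨hs2, ht2⟩ := hact j dj
      have hj1 : j - 1 + 1 = j := Nat.succ_pred_eq_of_pos (show 0 < j by omega)
      refine hno (j-1) ⟨?_, ?_⟩
      · have := hp1 (j-1)
        rw [hj1] at this
        exact hs2.trans this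
      · have h1 : p (j-1) < a (j-1) := hp2 (j-1)
        have h2 : a (j-1) ≤ a i := hadec.antitone (show i ≤ j - 1 by omega)
        linarith
    have hsum : ∑ j ∈ Finset.range N, d j ≤ 1 := by
      by_cases hz : ∀ j ∈ Finset.range N, d j = 0
      · rw [Finset.sum_eq_zero hz]; norm_num
      · push_neg at hz
        obtain ⟨j0, hj0m, hj0⟩ := hz
        have heq : ∑ j ∈ Finset.range N, d j = d j0 := by
          refine Finset.sum_eq_single_of_mem j0 hj0m ?_
          intro i _ hne
          by_contra hi
          rcases hne.lt_or_gt with h | h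
          · exact hpair i j0 h hi hj0
          · exact hpair j0 i h hj0 hi
        rw [heq]; exact hd1 j0
    have heq2 : u s - u t = (N:ℝ)⁻¹ * ∑ j ∈ Finset.range N, d j := by
      show (N:ℝ)⁻¹ * ∑ j ∈ Finset.range N, phi (a j) s -
        (N:ℝ)⁻¹ * ∑ j ∈ Finset.range N, phi (a j) t = _
      rw [← mul_sub, ← Finset.sum_sub_distrib]
    rw [heq2, one_div]
    calc (N:ℝ)⁻¹ * ∑ j ∈ Finset.range N, d j ≤ (N:ℝ)⁻¹ * 1 :=
      mul_le_mul_of_nonneg_left hsum (by positivity)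
      _ = (N:ℝ)⁻¹ := mul_one _
  -- the energy bound
  set g : Plane → ℝ := fun w => u ‖w‖ with hg
  set c : ℕ → ℝ := fun j => (2 * ((N:ℝ) * a j)⁻¹)^2 with hc
  set F : Plane → ℝ := fun z => ∑ j ∈ Finset.range N,
    (Metric.closedBall (0:Plane) (b j)).indicator (fun _ => c j) z with hF
  have hcpos : ∀ j, 0 ≤ c j := fun j => sq_nonneg _
  have hFnonneg : ∀ z, 0 ≤ F z := fun z =>
    Finset.sum_nonneg fun j _ => Set.indicator_nonneg (fun _ _ => hcpos j) z
  have hInt : ∀ j : ℕ, Integrable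
      ((Metric.closedBall (0:Plane) (b j)).indicator (fun _ => c j)) volume := by
    intro j
    rw [integrable_indicator_iff measurableSet_closedBall]
    exact integrableOn_const measure_closedBall_lt_top.ne
  have hFint : Integrable F volume := by
    rw [hF]
    exact integrable_finset_sum _ fun j _ => hInt j
  have hpt : ∀ z : Plane, ‖fderiv ℝ g z‖^2 ≤ F z := by
    intro z
    by_cases hann : ∃ j, j < N ∧ a j ≤ ‖z‖ ∧ ‖z‖ ≤ b j
    · obtain ⟨j, hjN, hza, hzb⟩ := hann
      have hopen : IsOpen {w : Plane | b (j+1) < ‖w‖} :=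
        isOpen_lt continuous_const continuous_norm
      have hmem : z ∈ {w : Plane | b (j+1) < ‖w‖} := lt_of_lt_of_le (hgap j) hza
      have hK0 : 0 < 2 * ((N:ℝ) * a j)⁻¹ := mul_pos two_pos (inv_pos.2 (mul_pos hN' (ha j)))
      have hlip : LipschitzOnWith (Real.toNNReal (2 * ((N:ℝ) * a j)⁻¹)) g
          {w : Plane | b (j+1) < ‖w‖} := by
        apply LipschitzOnWith.of_dist_le_mul
        intro w1 hw1 w2 hw2
        have h2 := hloc j hjN ‖w1‖ ‖w2‖ hw1 hw2
        have h3 : |‖w1‖ - ‖w2‖| ≤ dist w1 w2 := by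
          rw [dist_eq_norm]; exact abs_norm_sub_norm_le w1 w2
        have h1 : dist (g w1) (g w2) = |u ‖w1‖ - u ‖w2‖| := Real.dist_eq _ _
        rw [h1, Real.coe_toNNReal _ hK0.le]
        calc |u ‖w1‖ - u ‖w2‖| ≤ (2 * ((N:ℝ) * a j)⁻¹) * |‖w1‖ - ‖w2‖| := h2
          _ ≤ (2 * ((N:ℝ) * a j)⁻¹) * dist w1 w2 :=
            mul_le_mul_of_nonneg_left h3 hK0.le
      have hfd : ‖fderiv ℝ g z‖ ≤ 2 * ((N:ℝ) * a j)⁻¹ := by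
        have h := norm_fderiv_le_of_lipschitzOn ℝ (hopen.mem_nhds hmem) hlip
        rwa [Real.coe_toNNReal _ hK0.le] at h
      have hsq : ‖fderiv ℝ g z‖^2 ≤ c j := by
        rw [hc]
        exact pow_le_pow_left₀ (norm_nonneg _) hfd 2
      refine hsq.trans ?_
      have hzmem : z ∈ Metric.closedBall (0:Plane) (b j) := by
        rw [Metric.mem_closedBall, dist_zero_right]; exact hzb
      calc c j = (Metric.closedBall (0:Plane) (b j)).indicator (fun _ => c j) z :=
          (Set.indicator_of_mem hzmem fun _ => c j).symm
        _ ≤ F z := Finset.single_le_sum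
            (f := fun i => (Metric.closedBall (0:Plane) (b i)).indicator (fun _ => c i) z)
            (fun i _ => Set.indicator_nonneg (fun _ _ => hcpos i) z) (Finset.mem_range.2 hjN)
    · push_neg at hann
      have hflat : ∃ lo hi cc : ℝ, lo < ‖z‖ ∧ ‖z‖ < hi ∧
          ∀ t : ℝ, lo < t → t < hi → u t = cc := by
        by_cases h1 : ‖z‖ < a (N-1)
        · exact ⟨‖z‖ - 1, a (N-1), 1, by linarith, h1, fun t _ ht2 => huone t ht2.le⟩
        · push_neg at h1
          by_cases h2 : b 0 < ‖z‖
          · exact ⟨b 0, ‖z‖ + 1, 0, h2, by linarith,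
              fun t ht1 _ => huzero t (by rw [← hbR]; exact ht1.le)⟩
          · push_neg at h2
            have hN1 : N - 1 < N := by omega
            have hs1 : a (N-1) < ‖z‖ := by
              rcases eq_or_lt_of_le h1 with heq | hlt
              · exfalso
                have := hann (N-1) hN1 heq.le
                have := hab (N-1)
                linarith [heq]
              · exact hlt
            have hs2 : ‖z‖ < a 0 := by
              rcases lt_or_ge ‖z‖ (a 0) with h | h
              · exact h
              · exfalso
                have := hann 0 hN h
                linarith
            have hex : ∃ i, a i < ‖z‖ := ⟨N-1, hs1⟩
            set i0 := Nat.find hex with hi0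
            have hi0lt : a i0 < ‖z‖ := Nat.find_spec hex
            have hi0le : i0 ≤ N - 1 := Nat.find_min' hex hs1
            have hi0pos : i0 ≠ 0 := by
              intro h0
              rw [h0] at hi0lt
              linarith
            set j := i0 - 1 with hjdef
            have hji : j + 1 = i0 := by omega
            have hja : ‖z‖ < a j := by
              have hnot : ¬ a j < ‖z‖ := Nat.find_min hex (by omega)
              push_neg at hnot
              rcases eq_or_lt_of_le hnot with heq | hlt
              · exfalso
                have := hann j (by omega) heq.ge
                have := hab j
                linarith [heq]
              · exact hlt
            have hjb : b (j+1) < ‖z‖ := by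
              rw [hji]
              exact hann i0 (by omega) hi0lt.le
            exact ⟨b (j+1), a j, (N:ℝ)⁻¹ * (j+1), hjb, hja,
              fun t ht1 ht2 => huconst j (by omega) t ht1 ht2⟩
      obtain ⟨lo, hi, cc, hlo, hhi, hcc⟩ := hflat
      have hVopen : IsOpen {w : Plane | lo < ‖w‖ ∧ ‖w‖ < hi} := by
        have heq : {w : Plane | lo < ‖w‖ ∧ ‖w‖ < hi} =
            (fun w : Plane => ‖w‖) ⁻¹' (Set.Ioo lo hi) := rfl
        rw [heq]
        exact isOpen_Ioo.preimage continuous_norm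
      have hev : g =ᶠ[nhds z] (fun _ => cc) := by
        filter_upwards [hVopen.mem_nhds ⟨hlo, hhi⟩] with w hw
        exact hcc ‖w‖ hw.1 hw.2
      have hzero : fderiv ℝ g z = 0 := by
        rw [hev.fderiv_eq]
        exact fderiv_const_apply cc
      rw [hzero]
      simpa using hFnonneg z
  have hIle : (∫ z : Plane, ‖fderiv ℝ g z‖^2) ≤ ∫ z : Plane, F z :=
    integral_mono_of_nonneg (Filter.Eventually.of_forall fun z => by positivity) hFint
      (Filter.Eventually.of_forall hpt)
  have hG2 : Real.Gamma 2 = 1 := by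
    have h := Real.Gamma_nat_eq_factorial 1
    norm_num at h
    simpa using h
  have hvol : ∀ r : ℝ, 0 ≤ r →
      (volume (Metric.closedBall (0:Plane) r)).toReal = Real.pi * r^2 := by
    intro r hr
    rw [EuclideanSpace.volume_closedBall]
    simp only [Fintype.card_fin]
    rw [show ((2:ℕ):ℝ)/2 + 1 = 2 by norm_num, hG2,
      ← ENNReal.ofReal_pow hr, ← ENNReal.ofReal_mul (by positivity),
      ENNReal.toReal_ofReal (by positivity)]
    rw [div_one, Real.sq_sqrt Real.pi_nonneg]
    ring
  have hFval : ∫ z : Plane, F z = ∑ j ∈ Finset.range N, Real.pi * (b j)^2 * c j := by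
    rw [hF, integral_finset_sum _ fun j _ => hInt j]
    refine Finset.sum_congr rfl fun j _ => ?_
    rw [integral_indicator_const _ measurableSet_closedBall, measureReal_def, hvol (b j) (hbpos j).le,
      smul_eq_mul]
  have hterm : ∀ j ∈ Finset.range N, Real.pi * (b j)^2 * c j =
      4 * Real.pi * (Real.exp 1)^2 / (N:ℝ)^2 := by
    intro j _
    have haj : a j ≠ 0 := (ha j).ne'
    have hNne : (N:ℝ) ≠ 0 := hN'.ne'
    show Real.pi * (Real.exp 1 * a j)^2 * (2 * ((N:ℝ) * a j)⁻¹)^2 = _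
    have hE : Real.exp 1 ^ 2 = Real.exp 2 := by rw [sq, ← Real.exp_add]; norm_num
    field_simp
    ring
  have henergy : (∫ z : Plane, ‖fderiv ℝ g z‖^2) ≤ 100 / N := by
    refine hIle.trans ?_
    rw [hFval, Finset.sum_congr rfl hterm, Finset.sum_const, Finset.card_range,
      nsmul_eq_mul]
    have hsimp : (N:ℝ) * (4 * Real.pi * (Real.exp 1)^2 / (N:ℝ)^2) =
        4 * Real.pi * (Real.exp 1)^2 / N := by
      field_simp
    rw [hsimp]
    have hbound : 4 * Real.pi * (Real.exp 1)^2 ≤ 100 := by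
      nlinarith [Real.pi_lt_d2, Real.pi_pos, Real.exp_one_lt_d9, Real.exp_pos 1]
    rw [div_le_div_iff₀ hN' hN']
    nlinarith [hbound, hN']
  -- packaging
  refine ⟨a (N-1), u, Real.toNNReal ((N:ℝ)⁻¹ * ∑ i ∈ Finset.range N, (a i)⁻¹),
    ha (N-1), fun s _ t _ hst => huanti hst, ?_, fun t _ => hurange t,
    fun t ht => huone t ht.2, fun t ht => huzero t ht, henergy, ?_, ?_⟩
  · -- Lipschitz
    apply LipschitzOnWith.of_dist_le_mul
    intro s _ t _
    rw [Real.dist_eq, Real.dist_eq, Real.coe_toNNReal _ (by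
      have : (0:ℝ) ≤ ∑ i ∈ Finset.range N, (a i)⁻¹ :=
        Finset.sum_nonneg fun i _ => (inv_pos.2 (ha i)).le
      positivity)]
    exact hglob s t
  · -- oscillation along x
    intro k
    have hlt : x (k+1) < x k := hxanti (Nat.lt_succ_self k)
    have h1 : u (x k) ≤ u (x (k+1)) := huanti hlt.le
    rw [abs_sub_comm, abs_of_nonneg (sub_nonneg.2 h1)]
    refine osc (fun n => x (kx n)) hkx1 hkx2 _ _ hlt.le ?_
    rintro n ⟨hA, hB⟩
    have h2 : k < kx n := hxanti.lt_iff_gt.1 hB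
    have h3 : kx n < k + 1 := hxanti.lt_iff_gt.1 hA
    omega
  · -- oscillation along y
    intro k
    have hyy : y k < y (k+1) := hymono (Nat.lt_succ_self k)
    have hlt : |y (k+1)| < |y k| := by
      rw [abs_of_neg (hy0 k), abs_of_neg (hy0 (k+1))]
      linarith
    have h1 : u (|y k|) ≤ u (|y (k+1)|) := huanti hlt.le
    rw [abs_sub_comm, abs_of_nonneg (sub_nonneg.2 h1)]
    refine osc (fun n => |y (ky n)|) hky1 hky2 _ _ hlt.le ?_
    rintro n ⟨hA, hB⟩
    rw [abs_of_neg (hy0 (k+1)), abs_of_neg (hy0 (ky n))] at hA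
    rw [abs_of_neg (hy0 (ky n)), abs_of_neg (hy0 k)] at hB
    have h2 : k < ky n := hymono.lt_iff_lt.1 (by linarith)
    have h3 : ky n < k + 1 := hymono.lt_iff_lt.1 (by linarith)
    omega
end
end

section
/- Let W ⊂ ℝ² be an open equilateral triangle with vertices x₁, x₂, x₃, and let c₁, c₂, c₃ ∈ ℝ² be non-collinear points with barycenter a = (c₁ + c₂ + c₃)/3 and canonical tripod G. Then there exists a continuous surjection g : W̄ → G such that g(xᵢ) = cᵢ for i = 1, 2, 3, g maps the midpoint of each edge of W to a, and the restriction of g to each half-edge of ∂W (a segment from the midpoint of an edge of W to one of the endpoints of that edge) is a homeomorphism onto one of the segments [a, cᵢ] of G; in particular g maps ∂W onto G. -/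
open Set Metric

noncomputable section

/-- Given an open equilateral triangle `W` with vertices `x₀, x₁, x₂` and non-collinear points
`c₀, c₁, c₂` with barycenter `a` and canonical tripod `G = [a,c₀] ∪ [a,c₁] ∪ [a,c₂]`, there is a
continuous surjection `g : W̄ → G` sending `xᵢ` to `cᵢ`, sending the midpoint of each edge to
`a`, and mapping each half-edge of `∂W` homeomorphically onto one of the segments `[a, cᵢ]`;
in particular `g` maps `∂W` onto `G`. -/
theorem collapse_triangle_to_tripod
    (x : Fin 3 → Plane) (s : ℝ) (hs : 0 < s)
    (hx : ∀ i j, i ≠ j → dist (x i) (x j) = s)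
    (W : Set Plane) (hW : W = interior (convexHull ℝ (Set.range x)))
    (c : Fin 3 → Plane) (hc : ¬ Collinear ℝ (Set.range c))
    (a : Plane) (ha : a = (3 : ℝ)⁻¹ • (c 0 + c 1 + c 2))
    (G : Set Plane) (hG : G = ⋃ i : Fin 3, segment ℝ a (c i)) :
    ∃ g : Plane → Plane,
      ContinuousOn g (closure W) ∧
      g '' closure W = G ∧
      (∀ i, g (x i) = c i) ∧
      (∀ i j, i ≠ j → g (midpoint ℝ (x i) (x j)) = a) ∧
      (∀ i j, i ≠ j → ∃ k : Fin 3,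
        InjOn g (segment ℝ (midpoint ℝ (x i) (x j)) (x i)) ∧
        g '' segment ℝ (midpoint ℝ (x i) (x j)) (x i) = segment ℝ a (c k)) ∧
      g '' frontier W = G := by
  classical
  -- The vertices are affinely independent.
  have hxind : AffineIndependent ℝ x := by
    rw [affineIndependent_iff_not_collinear]
    intro hcol
    have h3 : Collinear ℝ ({x 0, x 1, x 2} : Set Plane) := by
      refine Collinear.subset ?_ hcol
      rintro p hp
      simp only [Set.mem_insert_iff, Set.mem_singleton_iff] at hp
      rcases hp with rfl | rfl | rfl <;> exact Set.mem_range_self _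
    rcases h3.wbtw_or_wbtw_or_wbtw with h | h | h
    · have := h.dist_add_dist
      rw [hx 0 1 (by decide), hx 1 2 (by decide), hx 0 2 (by decide)] at this
      linarith
    · have := h.dist_add_dist
      rw [hx 1 2 (by decide), hx 2 0 (by decide), hx 1 0 (by decide)] at this
      linarith
    · have := h.dist_add_dist
      rw [hx 2 0 (by decide), hx 0 1 (by decide), hx 2 1 (by decide)] at this
      linarith
  have hspan : affineSpan ℝ (Set.range x) = ⊤ := by
    rw [hxind.affineSpan_eq_top_iff_card_eq_finrank_add_one]
    simp [finrank_euclideanSpace_fin]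
  let b : AffineBasis (Fin 3) ℝ Plane := ⟨x, hxind, hspan⟩
  have hbeq : Set.range ⇑b = Set.range x := rfl
  set T := convexHull ℝ (Set.range x) with hT
  have hTconv : Convex ℝ T := convex_convexHull ℝ _
  have hTclosed : IsClosed T := ((Set.finite_range x).isCompact_convexHull (𝕜 := ℝ)).isClosed
  have hint_ne : (interior T).Nonempty :=
    interior_convexHull_nonempty_iff_affineSpan_eq_top.mpr hspan
  -- coordinate facts
  have hco : ∀ l j : Fin 3, b.coord l (x j) = if l = j then 1 else 0 := fun l j =>
    b.coord_apply l j
  have hsum1 : ∀ p : Plane, ∑ l, b.coord l p = 1 := fun p => b.sum_coord_apply_eq_one p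
  have hmid : ∀ (l : Fin 3) (p q : Plane),
      b.coord l (midpoint ℝ p q) = (b.coord l p + b.coord l q) / 2 := by
    intro l p q
    rw [(b.coord l).map_midpoint, midpoint_eq_smul_add, smul_eq_mul, invOf_eq_inv]
    ring
  have hline : ∀ (l : Fin 3) (p q : Plane) (u : ℝ),
      b.coord l (AffineMap.lineMap p q u) = (1 - u) * b.coord l p + u * b.coord l q := by
    intro l p q u
    rw [(b.coord l).apply_lineMap, AffineMap.lineMap_apply_module, smul_eq_mul, smul_eq_mul]
  have hmidcoord : ∀ i j l : Fin 3, i ≠ j →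
      b.coord l (midpoint ℝ (x i) (x j)) ∈ Icc (0:ℝ) (1/2) := by
    intro i j l hij
    rw [hmid, hco, hco]
    split_ifs with h1 h2
    · exact absurd (h1.symm.trans h2) hij
    · norm_num
    · norm_num
    · norm_num
  have hmidco_self : ∀ i j : Fin 3, i ≠ j →
      b.coord i (midpoint ℝ (x i) (x j)) = 1/2 := by
    intro i j hij
    rw [hmid, hco, hco, if_pos rfl, if_neg hij]
    norm_num
  -- the map
  set g : Plane → Plane := fun p => a + ∑ l, max (2 * b.coord l p - 1) 0 • (c l - a) with hg
  have gform : ∀ (p : Plane) (i : Fin 3), (∀ l, l ≠ i → 2 * b.coord l p - 1 ≤ 0) →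
      g p = a + max (2 * b.coord i p - 1) 0 • (c i - a) := by
    intro p i h
    rw [hg]
    simp only
    congr 1
    refine Finset.sum_eq_single i (fun l _ hl => ?_) (fun h' => absurd (Finset.mem_univ i) h')
    rw [max_eq_right (h l hl), zero_smul]
  -- `a` differs from each `c i`
  have hca : ∀ i : Fin 3, c i ≠ a := by
    have hmid3 : ∀ p q r : Plane, p = (3:ℝ)⁻¹ • (p + q + r) → p = midpoint ℝ q r := by
      intro p q r h
      have h3 : (3:ℝ) • p = p + q + r := by
        calc (3:ℝ) • p = (3:ℝ) • ((3:ℝ)⁻¹ • (p + q + r)) := by rw [← h]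
          _ = p + q + r := by rw [smul_smul]; norm_num
      have h2 : q + r = (2:ℝ) • p := by linear_combination (norm := module) -h3
      rw [midpoint_eq_smul_add, h2, smul_smul, invOf_mul_self']
      simp
    intro i hia
    apply hc
    fin_cases i
    · have h0 : c 0 = midpoint ℝ (c 1) (c 2) := hmid3 _ _ _ (hia.trans ha)
      have hw := (wbtw_midpoint ℝ (c 1) (c 2)).collinear
      rw [← h0] at hw
      refine Collinear.subset ?_ hw
      rw [Set.range_subset_iff]
      intro j; fin_cases j <;> simp
    · have h1 : (3:ℝ)⁻¹ • (c 0 + c 1 + c 2) = (3:ℝ)⁻¹ • (c 1 + c 0 + c 2) := by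
        congr 1; abel
      have h0 : c 1 = midpoint ℝ (c 0) (c 2) := hmid3 _ _ _ ((hia.trans ha).trans h1)
      have hw := (wbtw_midpoint ℝ (c 0) (c 2)).collinear
      rw [← h0] at hw
      refine Collinear.subset ?_ hw
      rw [Set.range_subset_iff]
      intro j; fin_cases j <;> simp
    · have h1 : (3:ℝ)⁻¹ • (c 0 + c 1 + c 2) = (3:ℝ)⁻¹ • (c 2 + c 0 + c 1) := by
        congr 1; abel
      have h0 : c 2 = midpoint ℝ (c 0) (c 1) := hmid3 _ _ _ ((hia.trans ha).trans h1)
      have hw := (wbtw_midpoint ℝ (c 0) (c 1)).collinear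
      rw [← h0] at hw
      refine Collinear.subset ?_ hw
      rw [Set.range_subset_iff]
      intro j; fin_cases j <;> simp
  -- closure and frontier of W
  have hclW : closure W = T := by
    rw [hW]
    refine Subset.antisymm (closure_minimal interior_subset hTclosed) ?_
    intro p hp
    obtain ⟨q, hq⟩ := hint_ne
    have h0 : Filter.Tendsto (fun n : ℕ => (1:ℝ) / (n + 1)) Filter.atTop (nhds 0) :=
      tendsto_one_div_add_atTop_nhds_zero_nat
    have htend : Filter.Tendsto (fun n : ℕ => p + ((1:ℝ) / (n + 1)) • (q - p))
        Filter.atTop (nhds p) := by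
      have h1 := (h0.smul_const (q - p)).const_add p
      simpa using h1
    refine mem_closure_of_tendsto htend (Filter.Eventually.of_forall fun n => ?_)
    refine hTconv.add_smul_sub_mem_interior hp hq ⟨by positivity, ?_⟩
    rw [div_le_one (by positivity)]
    linarith [Nat.cast_nonneg (α := ℝ) n]
  have hintW : interior W = interior T := by rw [hW, interior_interior]
  have hfr : frontier W = T \ interior T := by
    rw [frontier, hclW, hintW]
  have hint_eq : interior T = {p : Plane | ∀ l, 0 < b.coord l p} := by
    rw [hT, ← hbeq, b.interior_convexHull]
  -- key computation on half-edges
  have key : ∀ i j : Fin 3, i ≠ j → ∀ u : ℝ, u ∈ Icc (0:ℝ) 1 →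
      g (AffineMap.lineMap (midpoint ℝ (x i) (x j)) (x i) u) = a + u • (c i - a) := by
    intro i j hij u hu
    have hside : ∀ l, l ≠ i →
        2 * b.coord l (AffineMap.lineMap (midpoint ℝ (x i) (x j)) (x i) u) - 1 ≤ 0 := by
      intro l hl
      rw [hline, hco, if_neg hl]
      have h1 := (hmidcoord i j l hij).2
      have h0 := (hmidcoord i j l hij).1
      nlinarith [hu.1, hu.2]
    rw [gform _ i hside, hline, hmidco_self i j hij, hco, if_pos rfl]
    have heq : 2 * ((1 - u) * (1/2) + u * 1) - 1 = u := by ring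
    rw [heq, max_eq_left hu.1]
  -- vertices map to the c i
  have hgx : ∀ i, g (x i) = c i := by
    intro i
    have hside : ∀ l, l ≠ i → 2 * b.coord l (x i) - 1 ≤ 0 := by
      intro l hl; rw [hco, if_neg hl]; norm_num
    rw [gform _ i hside, hco, if_pos rfl]
    norm_num
  -- midpoints map to a
  have hgmid : ∀ i j, i ≠ j → g (midpoint ℝ (x i) (x j)) = a := by
    intro i j hij
    have hside : ∀ l, l ≠ (0 : Fin 3) →
        2 * b.coord l (midpoint ℝ (x i) (x j)) - 1 ≤ 0 := by
      intro l _
      have := (hmidcoord i j l hij).2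
      linarith
    rw [gform _ 0 hside]
    have := (hmidcoord i j 0 hij).2
    have h0 : max (2 * b.coord 0 (midpoint ℝ (x i) (x j)) - 1) 0 = 0 :=
      max_eq_right (by linarith)
    rw [h0, zero_smul, add_zero]
  -- image of each half-edge
  have hseg : ∀ i j, i ≠ j →
      g '' segment ℝ (midpoint ℝ (x i) (x j)) (x i) = segment ℝ a (c i) := by
    intro i j hij
    rw [segment_eq_image_lineMap, Set.image_image, segment_eq_image_lineMap]
    refine Set.image_congr ?_
    intro u hu
    rw [key i j hij u hu, AffineMap.lineMap_apply_module']
    exact (add_comm _ _).symm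
  have hinj : ∀ i j, i ≠ j → InjOn g (segment ℝ (midpoint ℝ (x i) (x j)) (x i)) := by
    intro i j hij
    rw [segment_eq_image_lineMap]
    rintro p ⟨u, hu, rfl⟩ q ⟨v, hv, rfl⟩ hpq
    rw [key i j hij u hu, key i j hij v hv] at hpq
    have huv : u = v := by
      have h1 : u • (c i - a) = v • (c i - a) := add_left_cancel hpq
      have h2 : (u - v) • (c i - a) = 0 := by rw [sub_smul, h1, sub_self]
      rcases smul_eq_zero.mp h2 with h | h
      · linarith [sub_eq_zero.mp h]
      · exact absurd (sub_eq_zero.mp h) (hca i)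
    rw [huv]
  -- half-edges lie in T and in the frontier
  have hxT : ∀ i, x i ∈ T := fun i => subset_convexHull ℝ _ (Set.mem_range_self i)
  have hsegT : ∀ i j, segment ℝ (midpoint ℝ (x i) (x j)) (x i) ⊆ T := by
    intro i j p hp
    have hm : midpoint ℝ (x i) (x j) ∈ T :=
      hTconv.segment_subset (hxT i) (hxT j) (midpoint_mem_segment _ _)
    exact hTconv.segment_subset hm (hxT i) hp
  have third : ∀ i j : Fin 3, i ≠ j → -(i + j) ≠ i ∧ -(i + j) ≠ j := by decide
  have hsegF : ∀ i j, i ≠ j → segment ℝ (midpoint ℝ (x i) (x j)) (x i) ⊆ frontier W := by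
    intro i j hij
    rw [hfr]
    intro p hp
    refine ⟨hsegT i j hp, ?_⟩
    obtain ⟨hki, hkj⟩ := third i j hij
    rw [segment_eq_image_lineMap] at hp
    obtain ⟨u, hu, rfl⟩ := hp
    rw [hint_eq]
    intro hmem
    have hk := hmem (-(i + j))
    rw [hline, hmid, hco, hco, if_neg hki, if_neg hkj] at hk
    norm_num at hk
  -- g maps T into G
  have himg_sub : ∀ p ∈ T, g p ∈ G := by
    intro p hp
    have hpc : ∀ l, 0 ≤ b.coord l p := by
      rw [hT, ← hbeq, b.convexHull_eq_nonneg_coord] at hp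
      exact hp
    have hsum := hsum1 p
    by_cases hbig : ∃ i, 1/2 < b.coord i p
    · obtain ⟨i, hi⟩ := hbig
      have hle1 : b.coord i p ≤ 1 := by
        have := Finset.single_le_sum (fun l _ => hpc l) (Finset.mem_univ i)
        linarith [hsum]
      have hside : ∀ l, l ≠ i → 2 * b.coord l p - 1 ≤ 0 := by
        intro l hl
        have hpair : ∑ m ∈ ({l, i} : Finset (Fin 3)), b.coord m p
            = b.coord l p + b.coord i p := by rw [Finset.sum_pair hl]
        have hle : ∑ m ∈ ({l, i} : Finset (Fin 3)), b.coord m p ≤ ∑ m, b.coord m p :=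
          Finset.sum_le_sum_of_subset_of_nonneg (Finset.subset_univ _)
            (fun m _ _ => hpc m)
        linarith
      rw [hG]
      refine Set.mem_iUnion.mpr ⟨i, ?_⟩
      rw [gform p i hside, max_eq_left (by linarith)]
      rw [segment_eq_image_lineMap]
      refine ⟨2 * b.coord i p - 1, ⟨by linarith, by linarith⟩, ?_⟩
      rw [AffineMap.lineMap_apply_module']
      exact add_comm _ _
    · push_neg at hbig
      have hside : ∀ l, l ≠ (0 : Fin 3) → 2 * b.coord l p - 1 ≤ 0 := fun l _ => by
        linarith [hbig l]
      rw [gform p 0 hside, max_eq_right (by linarith [hbig 0]), zero_smul, add_zero]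
      rw [hG]
      exact Set.mem_iUnion.mpr ⟨0, left_mem_segment ℝ a (c 0)⟩
  have hne3 : ∀ k : Fin 3, k ≠ k + 1 := by decide
  -- continuity
  have hgc : Continuous g := by
    rw [hg]
    refine continuous_const.add (continuous_finset_sum _ fun l _ => ?_)
    exact (((continuous_const.mul ((b.coord l).continuous_of_finiteDimensional)).sub
      continuous_const).max continuous_const).smul continuous_const
  refine ⟨g, hgc.continuousOn, ?_, hgx, hgmid, ?_, ?_⟩
  · rw [hclW]
    refine Subset.antisymm ?_ ?_
    · rintro _ ⟨p, hp, rfl⟩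
      exact himg_sub p hp
    · rw [hG]
      intro y hy
      rw [Set.mem_iUnion] at hy
      obtain ⟨i, hi⟩ := hy
      rw [← hseg i (i + 1) (hne3 i)] at hi
      obtain ⟨p, hp, rfl⟩ := hi
      exact ⟨p, hsegT i (i + 1) hp, rfl⟩
  · intro i j hij
    exact ⟨i, hinj i j hij, hseg i j hij⟩
  · refine Subset.antisymm ?_ ?_
    · rintro _ ⟨p, hp, rfl⟩
      have hpT : p ∈ T := by
        rw [← hclW]
        exact frontier_subset_closure hp
      exact himg_sub p hpT
    · rw [hG]
      intro y hy
      rw [Set.mem_iUnion] at hy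
      obtain ⟨i, hi⟩ := hy
      rw [← hseg i (i + 1) (hne3 i)] at hi
      obtain ⟨p, hp, rfl⟩ := hi
      exact ⟨p, hsegF i (i + 1) (hne3 i) hp, rfl⟩
end
end
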